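/- Let T be a rooted tree with distinct positive node weights, and define the bonus S(i) recursively by S(i) = W_i if i is a leaf, and S(i) = W_i · 1{W_i > max over children j of S(j)} otherwise. Then for every node i, S(i) = W_i · 1{i belongs to the greedy independent set of the subtree T_i rooted at i}. -/

import Mathlib

open scoped Classical

/-- Finite rooted trees with real node weights. -/
inductive WTree : Type
  | node : ℝ → List WTree → WTree

namespace WTree

/-- The weight of the root. -/
def wt : WTree → ℝ
  | node w _ => w

/-- The children subtrees of the root. -/
def children : WTree → List WTree
  | node _ cs => cs

/-- The bonus `S`: `S(i) = W_i` for a leaf, and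
`S(i) = W_i · 1{W_i > max over children j of S(j)}` otherwise. -/
noncomputable def bonus : WTree → ℝ
  | node w cs =>
    if cs = [] then w
    else if ((cs.attach.map fun c => bonus c.1).foldr max 0) < w then w else 0
decreasing_by
  all_goals
    have h1 := List.sizeOf_lt_of_mem c.2
    simp only [WTree.node.sizeOf_spec]
    omega

end WTree

namespace WTree

/-- The subtree at a given address (sequence of child indices), if it exists. -/
def subtreeAt : WTree → List ℕ → Option WTree
  | t, [] => some t
  | node _ cs, i :: p =>
    match cs[i]? with
    | some c => subtreeAt c p
    | none => none
termination_by _ p => p.length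

/-- The list of addresses of all nodes of the tree. -/
def addrs : WTree → List (List ℕ)
  | node _ cs =>
    [] :: (List.range cs.length).flatMap fun i =>
      match h : cs[i]? with
      | some c => (addrs c).map (i :: ·)
      | none => []
decreasing_by
  rename_i cs
  have hmem : c ∈ cs := by
    obtain ⟨hlt, rfl⟩ := List.getElem?_eq_some_iff.mp h
    exact List.getElem_mem hlt
  have h1 := List.sizeOf_lt_of_mem hmem
  simp only [WTree.node.sizeOf_spec]
  omega

/-- `p` is (the address of) a node of `t`. -/
def isNode (t : WTree) (p : List ℕ) : Prop := (subtreeAt t p).isSome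

/-- The weight of the node at address `p` (junk value `0` if there is no such node). -/
def wAt (t : WTree) (p : List ℕ) : ℝ :=
  match subtreeAt t p with
  | some s => s.wt
  | none => 0

/-- Two addresses are adjacent in the tree iff one is the parent of the other. -/
def adjAddr (p q : List ℕ) : Prop :=
  (∃ i, q = p ++ [i]) ∨ ∃ i, p = q ++ [i]

end WTree

/-- Auxiliary counting lemma used for termination of the greedy recursion. -/
theorem List.countP_lt_countP {α : Type*} (l : List α) (P Q : α → Bool)
    (hPQ : ∀ x, Q x = true → P x = true) {a : α} (ha : a ∈ l) (haP : P a = true)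
    (haQ : Q a = false) : l.countP Q < l.countP P := by
  induction l with
  | nil => cases ha
  | cons b l ih =>
    rw [List.countP_cons, List.countP_cons]
    rcases List.mem_cons.mp ha with rfl | hb
    · rw [haP, haQ]
      have hle : l.countP Q ≤ l.countP P := List.countP_mono_left fun x _ hx => hPQ x hx
      simp only [Bool.false_eq_true, if_true, if_false]
      omega
    · have := ih hb
      by_cases hq : Q b = true
      · rw [hq, hPQ b hq]; omega
      · have hq' : Q b = false := by simpa using hq
        rw [hq']
        by_cases hp : P b = true
        · rw [hp]; simp only [Bool.false_eq_true, if_false, if_true]; omega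
        · have hp' : P b = false := by simpa using hp
          rw [hp']; omega

namespace WTree

/-- Membership of the node at address `p` in the independent set produced by the greedy
algorithm on the tree `t` (repeatedly pick the heaviest remaining node, add it, delete its
neighbors): a node is selected iff no heavier neighbor is selected. -/
def greedyMem (t : WTree) (p : List ℕ) : Prop :=
  isNode t p ∧ ∀ q, q ∈ addrs t → adjAddr p q → wAt t p < wAt t q → ¬ greedyMem t q
termination_by (addrs t).countP fun q => decide (wAt t p < wAt t q)
decreasing_by
  rename_i hq hadj hlt
  exact List.countP_lt_countP (addrs t) _ _
    (fun x hx => by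
      simp only [decide_eq_true_eq] at *
      exact lt_trans hlt hx) hq (by simpa using hlt) (by simp)

end WTree


namespace WTree

theorem subtreeAt_nil (t : WTree) : subtreeAt t [] = some t := by rw [subtreeAt]

theorem subtreeAt_cons_some {cs : List WTree} {i : ℕ} {c : WTree} (hc : cs[i]? = some c)
    (w : ℝ) (p : List ℕ) : subtreeAt (node w cs) (i :: p) = subtreeAt c p := by
  rw [subtreeAt, hc]

theorem subtreeAt_cons_none {cs : List WTree} {i : ℕ} (hc : cs[i]? = none)
    (w : ℝ) (p : List ℕ) : subtreeAt (node w cs) (i :: p) = none := by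
  rw [subtreeAt, hc]

theorem cons_mem_addrs_iff (w : ℝ) (cs : List WTree) (i : ℕ) (q : List ℕ) :
    i :: q ∈ addrs (node w cs) ↔ ∃ c, cs[i]? = some c ∧ q ∈ addrs c := by
  rw [addrs]
  simp only [List.mem_cons, List.mem_flatMap, List.mem_range, reduceCtorEq, false_or]
  constructor
  · rintro ⟨j, hj, hmem⟩
    split at hmem
    next c hc =>
      obtain ⟨q', hq', heq⟩ := List.mem_map.mp hmem
      obtain ⟨rfl, rfl⟩ : j = i ∧ q' = q := by
        injection heq with h1 h2; exact ⟨h1, h2⟩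
      exact ⟨c, hc, hq'⟩
    next => cases hmem
  · rintro ⟨c, hc, hq⟩
    have hlt : i < cs.length := (List.getElem?_eq_some_iff.mp hc).1
    refine ⟨i, hlt, ?_⟩
    split
    next c' hc' =>
      rw [hc] at hc'; injection hc' with h; subst h
      exact List.mem_map.mpr ⟨q, hq, rfl⟩
    next hc' => rw [hc] at hc'; cases hc'

theorem nil_mem_addrs (t : WTree) : [] ∈ addrs t := by
  obtain ⟨w, cs⟩ := t; rw [addrs]; exact List.mem_cons_self

theorem mem_addrs_iff (t : WTree) (p : List ℕ) : p ∈ addrs t ↔ (subtreeAt t p).isSome := by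
  induction p generalizing t with
  | nil => simp [subtreeAt_nil, nil_mem_addrs]
  | cons i q ih =>
    obtain ⟨w, cs⟩ := t
    rw [cons_mem_addrs_iff]
    cases hc : cs[i]? with
    | none => simp [subtreeAt_cons_none hc]
    | some c => simp [subtreeAt_cons_some hc, ih c, hc]

theorem subtreeAt_append (t : WTree) (p q : List ℕ) :
    subtreeAt t (p ++ q) = (subtreeAt t p).bind (fun s => subtreeAt s q) := by
  induction p generalizing t with
  | nil => simp [subtreeAt_nil]
  | cons i p ih =>
    obtain ⟨w, cs⟩ := t
    cases hc : cs[i]? with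
    | none => simp [subtreeAt_cons_none hc]
    | some c => simp only [List.cons_append, subtreeAt_cons_some hc, ih]

theorem wAt_eq_of_subtreeAt {t s : WTree} {p : List ℕ} (h : subtreeAt t p = some s) :
    wAt t p = s.wt := by
  unfold wAt; rw [h]

theorem wAt_nil (t : WTree) : wAt t [] = t.wt := wAt_eq_of_subtreeAt (subtreeAt_nil t)

theorem wAt_cons_some {cs : List WTree} {i : ℕ} {c : WTree} (hc : cs[i]? = some c)
    (w : ℝ) (q : List ℕ) : wAt (node w cs) (i :: q) = wAt c q := by
  unfold wAt; rw [subtreeAt_cons_some hc]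

theorem greedyMem_cons {w : ℝ} {cs : List WTree} {i : ℕ} {c : WTree}
    (hc : cs[i]? = some c) (hw : w < c.wt) (q : List ℕ) :
    greedyMem (node w cs) (i :: q) ↔ greedyMem c q := by
  rw [greedyMem.eq_1 (node w cs), greedyMem.eq_1 c]
  have hnode : isNode (node w cs) (i :: q) ↔ isNode c q := by
    unfold isNode; rw [subtreeAt_cons_some hc]
  have hwq : wAt (node w cs) (i :: q) = wAt c q := wAt_cons_some hc w q
  refine and_congr hnode (Iff.intro ?_ ?_)
  · intro H r' hr' hadj hlt
    have hmem : i :: r' ∈ addrs (node w cs) :=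
      (cons_mem_addrs_iff w cs i r').mpr ⟨c, hc, hr'⟩
    have hadj' : adjAddr (i :: q) (i :: r') := by
      rcases hadj with ⟨k, rfl⟩ | ⟨k, rfl⟩
      · exact Or.inl ⟨k, rfl⟩
      · exact Or.inr ⟨k, rfl⟩
    have hlt' : wAt (node w cs) (i :: q) < wAt (node w cs) (i :: r') := by
      rw [hwq, wAt_cons_some hc]; exact hlt
    have := H (i :: r') hmem hadj' hlt'
    rw [greedyMem_cons hc hw r'] at this
    exact this
  · intro H r hr hadj hlt
    rcases hadj with ⟨k, rfl⟩ | ⟨k, hk⟩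
    · -- r = (i :: q) ++ [k] = i :: (q ++ [k])
      obtain ⟨c', hc', hr'⟩ := (cons_mem_addrs_iff w cs i (q ++ [k])).mp hr
      rw [hc] at hc'; injection hc' with h; subst h
      have hlt' : wAt c q < wAt c (q ++ [k]) := by
        rw [← hwq, ← wAt_cons_some hc w (q ++ [k])]; exact hlt
      have := H (q ++ [k]) hr' (Or.inl ⟨k, rfl⟩) hlt'
      rw [← greedyMem_cons hc hw (q ++ [k])] at this
      exact this
    · -- i :: q = r ++ [k]
      cases r with
      | nil =>
        -- then q = [] and k = i;  r = [] is the parent, lighter than c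
        simp only [List.nil_append] at hk
        injection hk with h1 h2; subst h1; subst h2
        rw [hwq, wAt_nil c, wAt_nil (node w cs)] at hlt
        have hwt : (node w cs).wt = w := rfl
        rw [hwt] at hlt
        exact absurd (lt_trans hw hlt) (lt_irrefl _)
      | cons j r' =>
        simp only [List.cons_append] at hk
        injection hk with h1 h2; subst h1
        obtain ⟨c', hc', hr'⟩ := (cons_mem_addrs_iff w cs i r').mp hr
        rw [hc] at hc'; injection hc' with h; subst h
        have hlt' : wAt c q < wAt c r' := by
          rw [← hwq, ← wAt_cons_some hc w r']; exact hlt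
        have := H r' hr' (Or.inr ⟨k, h2⟩) hlt'
        rw [← greedyMem_cons hc hw r'] at this
        exact this
termination_by (addrs (node w cs)).countP fun r => decide (wAt (node w cs) (i :: q) < wAt (node w cs) r)
decreasing_by
  · exact List.countP_lt_countP _ _ _
      (fun x hx => by
        simp only [decide_eq_true_eq] at *
        exact lt_trans hlt' hx) hmem (by simpa using hlt') (by simp)
  · have hmem : i :: (q ++ [k]) ∈ addrs (node w cs) := hr
    have hlt'' : wAt (node w cs) (i :: q) < wAt (node w cs) (i :: (q ++ [k])) := by
      rw [wAt_cons_some hc, wAt_cons_some hc]; exact hlt'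
    exact List.countP_lt_countP _ _ _
      (fun x hx => by
        simp only [decide_eq_true_eq] at *
        exact lt_trans hlt'' hx) hmem (by simpa using hlt'') (by simp)
  · have hmem : i :: r' ∈ addrs (node w cs) := hr
    have hlt'' : wAt (node w cs) (i :: q) < wAt (node w cs) (i :: r') := by
      rw [wAt_cons_some hc, wAt_cons_some hc]; exact hlt'
    exact List.countP_lt_countP _ _ _
      (fun x hx => by
        simp only [decide_eq_true_eq] at *
        exact lt_trans hlt'' hx) hmem (by simpa using hlt'') (by simp)

theorem foldr_max_lt {l : List ℝ} {w : ℝ} : l.foldr max 0 < w ↔ 0 < w ∧ ∀ x ∈ l, x < w := by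
  induction l with
  | nil => simp
  | cons a l ih =>
    simp only [List.foldr_cons, max_lt_iff, ih, List.mem_cons]
    constructor
    · rintro ⟨ha, h0, hl⟩
      exact ⟨h0, fun x hx => by rcases hx with rfl | hx; exact ha; exact hl x hx⟩
    · rintro ⟨h0, h⟩
      exact ⟨h a (Or.inl rfl), h0, fun x hx => h x (Or.inr hx)⟩

theorem greedyMem_nil_iff (w : ℝ) (cs : List WTree) :
    greedyMem (node w cs) [] ↔
      ∀ (i : ℕ) (c : WTree), cs[i]? = some c → w < c.wt → ¬ greedyMem c [] := by
  rw [greedyMem.eq_1]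
  have hnode : isNode (node w cs) [] := by
    unfold isNode; rw [subtreeAt_nil]; rfl
  simp only [hnode, true_and]
  constructor
  · intro H i c hc hw hg
    have hmem : i :: ([] : List ℕ) ∈ addrs (node w cs) :=
      (cons_mem_addrs_iff w cs i []).mpr ⟨c, hc, nil_mem_addrs c⟩
    have hadj : adjAddr [] [i] := Or.inl ⟨i, rfl⟩
    have hlt : wAt (node w cs) [] < wAt (node w cs) [i] := by
      rw [wAt_nil, wAt_cons_some hc, wAt_nil]; exact hw
    exact H [i] hmem hadj hlt ((greedyMem_cons hc hw []).mpr hg)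
  · intro H r hr hadj hlt
    rcases hadj with ⟨k, rfl⟩ | ⟨k, hk⟩
    · simp only [List.nil_append] at *
      obtain ⟨c, hc, _⟩ := (cons_mem_addrs_iff w cs k []).mp hr
      have hw : w < c.wt := by
        rw [wAt_nil, wAt_cons_some hc, wAt_nil] at hlt; exact hlt
      rw [greedyMem_cons hc hw]
      exact H k c hc hw
    · exact absurd hk (by simp)

theorem bonus_eq_indicator : ∀ (s : WTree),
    (∀ p ∈ s.addrs, 0 < s.wAt p) →
    (∀ p ∈ s.addrs, ∀ q ∈ s.addrs, p ≠ q → s.wAt p ≠ s.wAt q) →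
    s.bonus = if s.greedyMem [] then s.wt else 0
  | node w cs => by
    intro hpos hdist
    have hw0 : 0 < w := by
      have := hpos [] (nil_mem_addrs _)
      rwa [wAt_nil] at this
    by_cases hcs : cs = []
    · subst hcs
      rw [bonus]
      simp only [if_pos rfl]
      have hg : greedyMem (node w []) [] := by
        rw [greedyMem_nil_iff]
        intro i c hc
        simp at hc
      rw [if_pos hg]; rfl
    · rw [bonus, if_neg hcs]
      have hrec : ∀ c ∈ cs, c.bonus = if c.greedyMem [] then c.wt else 0 := by
        intro c hcmem
        obtain ⟨i, hlt, rfl⟩ := List.getElem_of_mem hcmem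
        have hc : cs[i]? = some cs[i] := List.getElem?_eq_some_iff.mpr ⟨hlt, rfl⟩
        apply bonus_eq_indicator
        · intro p hp
          have := hpos (i :: p) ((cons_mem_addrs_iff w cs i p).mpr ⟨cs[i], hc, hp⟩)
          rwa [wAt_cons_some hc] at this
        · intro p hp q hq hne
          have := hdist (i :: p) ((cons_mem_addrs_iff w cs i p).mpr ⟨cs[i], hc, hp⟩)
            (i :: q) ((cons_mem_addrs_iff w cs i q).mpr ⟨cs[i], hc, hq⟩)
            (by simpa using hne)
          rwa [wAt_cons_some hc, wAt_cons_some hc] at this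
      have key : ((cs.attach.map fun c => bonus c.1).foldr max 0) < w ↔
          greedyMem (node w cs) [] := by
        rw [foldr_max_lt, greedyMem_nil_iff]
        constructor
        · rintro ⟨-, hb⟩ i c hc hw hg
          have hcmem : c ∈ cs := by
            obtain ⟨hlt, rfl⟩ := List.getElem?_eq_some_iff.mp hc
            exact List.getElem_mem hlt
          have h1 : c.bonus < w := hb c.bonus (by
            simp only [List.mem_map, List.mem_attach, true_and]
            exact ⟨⟨c, hcmem⟩, rfl⟩)
          rw [hrec c hcmem, if_pos hg] at h1
          exact absurd (lt_trans hw h1) (lt_irrefl _)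
        · intro H
          refine ⟨hw0, ?_⟩
          intro x hx
          simp only [List.mem_map, List.mem_attach, true_and] at hx
          obtain ⟨⟨c, hcmem⟩, rfl⟩ := hx
          obtain ⟨i, hilt, rfl⟩ := List.getElem_of_mem hcmem
          have hc : cs[i]? = some cs[i] := List.getElem?_eq_some_iff.mpr ⟨hilt, rfl⟩
          rw [hrec _ hcmem]
          by_cases hg : greedyMem cs[i] []
          · rw [if_pos hg]
            have hne : w ≠ (cs[i]).wt := by
              have := hdist [] (nil_mem_addrs _)
                (i :: []) ((cons_mem_addrs_iff w cs i []).mpr ⟨cs[i], hc, nil_mem_addrs _⟩)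
                (by simp)
              rwa [wAt_nil, wAt_cons_some hc, wAt_nil] at this
            rcases lt_or_gt_of_ne hne with h | h
            · exact absurd hg (H i cs[i] hc h)
            · exact h
          · rw [if_neg hg]; exact hw0
      show _ = if greedyMem (node w cs) [] then w else 0
      by_cases hg : greedyMem (node w cs) []
      · rw [if_pos (key.mpr hg), if_pos hg]
      · rw [if_neg (fun h => hg (key.mp h)), if_neg hg]
decreasing_by
  have h1 := List.sizeOf_lt_of_mem hcmem
  simp only [WTree.node.sizeOf_spec]
  omega

end WTree

open WTree in
/-- For a rooted tree with distinct positive node weights, the bonus of every node `i`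
equals `W_i · 1{i belongs to the greedy independent set of the subtree rooted at i}`. -/
theorem bonus_eq_weight_mul_greedy_indicator (t : WTree)
    (hpos : ∀ p ∈ t.addrs, 0 < t.wAt p)
    (hdist : ∀ p ∈ t.addrs, ∀ q ∈ t.addrs, p ≠ q → t.wAt p ≠ t.wAt q) :
    ∀ p ∈ t.addrs, ∀ s : WTree, t.subtreeAt p = some s →
      s.bonus = if s.greedyMem [] then s.wt else 0 := by
  
  intro p hp s hs
  apply bonus_eq_indicator
  · intro q hq
    rw [mem_addrs_iff] at hq
    obtain ⟨u, hu⟩ := Option.isSome_iff_exists.mp hq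
    have h1 : t.subtreeAt (p ++ q) = some u := by
      rw [subtreeAt_append, hs]; exact hu
    have hmem : p ++ q ∈ t.addrs := by rw [mem_addrs_iff, h1]; rfl
    have := hpos (p ++ q) hmem
    rwa [wAt_eq_of_subtreeAt h1, ← wAt_eq_of_subtreeAt hu] at this
  · intro q1 hq1 q2 hq2 hne
    rw [mem_addrs_iff] at hq1 hq2
    obtain ⟨u1, hu1⟩ := Option.isSome_iff_exists.mp hq1
    obtain ⟨u2, hu2⟩ := Option.isSome_iff_exists.mp hq2
    have h1 : t.subtreeAt (p ++ q1) = some u1 := by rw [subtreeAt_append, hs]; exact hu1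
    have h2 : t.subtreeAt (p ++ q2) = some u2 := by rw [subtreeAt_append, hs]; exact hu2
    have := hdist (p ++ q1) (by rw [mem_addrs_iff, h1]; rfl)
      (p ++ q2) (by rw [mem_addrs_iff, h2]; rfl)
      (fun h => hne (List.append_cancel_left h))
    rwa [wAt_eq_of_subtreeAt h1, ← wAt_eq_of_subtreeAt hu1,
      wAt_eq_of_subtreeAt h2, ← wAt_eq_of_subtreeAt hu2] at this
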